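/- Let h : ℝⁿ → ℝ be continuously differentiable, let α be an extended class-K function, and let u : ℝⁿ → ℝᵐ be a continuous feedback such that for all x ∈ ℝⁿ, L_f h(x) + L_g h(x)·u(x) + α(h(x)) ≥ 0. Then every closed-loop trajectory x(·) with h(x(0)) ≥ 0 satisfies h(x(t)) ≥ 0 for all t ≥ 0; that is, the set Σ = {x ∈ ℝⁿ : h(x) ≥ 0} is forward invariant for the closed-loop system. -/

import Mathlib

/-- Zeroing control barrier function invariance (Corollary 1 of Xu et al.):
if `h` is continuously differentiable, `α` is an extended class-K function
(locally Lipschitz, strictly increasing, `α(0) = 0`), and the continuous feedback `u`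
satisfies `L_f h(x) + L_g h(x)·u(x) + α(h(x)) ≥ 0` for all `x`, then the set
`Σ = {x : h(x) ≥ 0}` is forward invariant for the closed-loop system. -/
theorem zcbf_forward_invariance {n m : ℕ}
    (f : (Fin n → ℝ) → (Fin n → ℝ))
    (g : (Fin n → ℝ) → (Fin n → Fin m → ℝ))
    (hf : LocallyLipschitz f) (hg : LocallyLipschitz g)
    (h : (Fin n → ℝ) → ℝ) (hC1 : ContDiff ℝ 1 h)
    (α : ℝ → ℝ) (hα_lip : LocallyLipschitz α) (hα_mono : StrictMono α) (hα0 : α 0 = 0)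
    (u : (Fin n → ℝ) → (Fin m → ℝ)) (hu : Continuous u)
    (hcbf : ∀ x : Fin n → ℝ,
      fderiv ℝ h x (f x) + fderiv ℝ h x (fun i => ∑ j, g x i j * u x j) + α (h x) ≥ 0)
    (x : ℝ → (Fin n → ℝ))
    (hx : ∀ t ≥ (0:ℝ),
      HasDerivAt x (f (x t) + fun i => ∑ j, g (x t) i j * u (x t) j) t)
    (h0 : 0 ≤ h (x 0)) :
    ∀ t ≥ (0:ℝ), 0 ≤ h (x t) := by
  intro t ht
  by_contra hneg
  push_neg at hneg
  set y : ℝ → ℝ := fun s => h (x s) with hy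
  have hyd : ∀ s, 0 ≤ s → HasDerivAt y
      (fderiv ℝ h (x s) (f (x s)) +
        fderiv ℝ h (x s) (fun i => ∑ j, g (x s) i j * u (x s) j)) s := by
    intro s hs
    have hd := ((hC1.differentiable one_ne_zero) (x s)).hasFDerivAt
    have := hd.comp_hasDerivAt s (hx s hs)
    simp only [map_add] at this
    exact this
  have hyc : ContinuousOn y (Set.Icc 0 t) := fun s hs =>
    ((hyd s hs.1).continuousAt).continuousWithinAt
  set S : Set ℝ := {s | s ∈ Set.Icc 0 t ∧ 0 ≤ y s} with hS
  have hSclosed : IsClosed S := by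
    have : S = Set.Icc 0 t ∩ y ⁻¹' Set.Ici 0 := by
      ext s; simp [hS, Set.mem_Icc, and_assoc]
    rw [this]
    exact hyc.preimage_isClosed_of_isClosed isClosed_Icc isClosed_Ici
  have hSne : S.Nonempty := ⟨0, ⟨le_rfl, ht⟩, h0⟩
  have hScompact : IsCompact S := (isCompact_Icc).of_isClosed_subset hSclosed fun s hs => hs.1
  set t₀ := sSup S with ht₀
  have ht₀S : t₀ ∈ S := hScompact.sSup_mem hSne
  have ht₀le : t₀ ≤ t := ht₀S.1.2
  have ht₀lt : t₀ < t := lt_of_le_of_ne ht₀le (by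
    intro heq
    exact absurd ht₀S.2 (by rw [heq]; exact not_le.mpr hneg))
  have hyneg : ∀ s, t₀ < s → s ≤ t → y s < 0 := by
    intro s hs₁ hs₂
    by_contra hge
    push_neg at hge
    have hsS : s ∈ S := ⟨⟨le_trans ht₀S.1.1 hs₁.le, hs₂⟩, hge⟩
    exact absurd (le_csSup (hScompact.bddAbove) hsS) (not_le.mpr hs₁)
  have hmono : MonotoneOn y (Set.Icc t₀ t) := by
    apply monotoneOn_of_deriv_nonneg (convex_Icc t₀ t)
    · exact hyc.mono (Set.Icc_subset_Icc_left ht₀S.1.1)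
    · intro s hs
      rw [interior_Icc] at hs
      exact ((hyd s (le_trans ht₀S.1.1 hs.1.le)).differentiableAt).differentiableWithinAt
    · intro s hs
      rw [interior_Icc] at hs
      have hs0 : (0:ℝ) ≤ s := le_trans ht₀S.1.1 hs.1.le
      rw [(hyd s hs0).deriv]
      have hαneg : α (y s) ≤ 0 := by
        have := hα_mono.monotone (hyneg s hs.1 hs.2.le).le
        simpa [hα0] using this
      have := hcbf (x s)
      linarith
  have := hmono ⟨le_rfl, ht₀le⟩ ⟨ht₀le, le_rfl⟩ ht₀le
  have : (0:ℝ) ≤ y t := le_trans ht₀S.2 this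
  exact absurd this (not_le.mpr hneg)
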